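/- For the delta-rule update with orthonormal keys, the final state depends only on the set of keys seen (not their order or multiplicities), provided each key i is always paired with the same value v_i: streams with the same support set of indices yield the same final state W = Σ_{i ∈ support} k_iᵀ v_i. -/

import Mathlib

open Matrix
open Classical

lemma vecMul_vecMulVec' {d : ℕ} (x a b : Fin d → ℝ) :
    Matrix.vecMul x (Matrix.vecMulVec a b) = (x ⬝ᵥ a) • b := by
  funext j
  simp [Matrix.vecMul, Matrix.vecMulVec, dotProduct, Finset.sum_mul, mul_assoc]

lemma vecMul_sum' {d : ℕ} {α : Type*} (x : Fin d → ℝ) (s : Finset α)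
    (A : α → Matrix (Fin d) (Fin d) ℝ) :
    Matrix.vecMul x (∑ i ∈ s, A i) = ∑ i ∈ s, Matrix.vecMul x (A i) := by
  classical
  induction s using Finset.induction_on with
  | empty => simp
  | insert _ _ h ih => simp [Finset.sum_insert h, Matrix.vecMul_add, ih]

lemma delta_general {d m : ℕ} (k v : Fin m → Fin d → ℝ)
    (hk : ∀ i j : Fin m, k i ⬝ᵥ k j = if i = j then (1 : ℝ) else 0)
    (σ : ℕ → Fin m) (W : ℕ → Matrix (Fin d) (Fin d) ℝ) (hW0 : W 0 = 0)
    (hWs : ∀ t : ℕ, W (t + 1) =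
      W t - Matrix.vecMulVec (k (σ t)) (Matrix.vecMul (k (σ t)) (W t))
          + Matrix.vecMulVec (k (σ t)) (v (σ t))) (N : ℕ) :
    W N = ∑ i ∈ Finset.univ.filter (fun i : Fin m => ∃ t < N, σ t = i),
            Matrix.vecMulVec (k i) (v i) := by
  induction N with
  | zero => simp [hW0]
  | succ n ih =>
    set S := Finset.univ.filter (fun i : Fin m => ∃ t < n, σ t = i) with hS
    have hset : Finset.univ.filter (fun i : Fin m => ∃ t < n + 1, σ t = i)
        = insert (σ n) S := by
      ext i
      simp only [hS, Finset.mem_filter, Finset.mem_univ, true_and, Finset.mem_insert]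
      constructor
      · rintro ⟨t, ht, rfl⟩
        rcases Nat.lt_succ_iff_lt_or_eq.mp ht with h | rfl
        · exact Or.inr ⟨t, h, rfl⟩
        · exact Or.inl rfl
      · rintro (rfl | ⟨t, ht, rfl⟩)
        · exact ⟨n, Nat.lt_succ_self n, rfl⟩
        · exact ⟨t, Nat.lt_succ_of_lt ht, rfl⟩
    have hvm : Matrix.vecMul (k (σ n)) (W n)
        = if σ n ∈ S then v (σ n) else 0 := by
      rw [ih, vecMul_sum']
      have : ∀ i ∈ S, Matrix.vecMul (k (σ n)) (Matrix.vecMulVec (k i) (v i))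
          = if σ n = i then v i else 0 := by
        intro i _
        rw [vecMul_vecMulVec', hk]
        split <;> simp
      rw [Finset.sum_congr rfl this, Finset.sum_ite_eq S (σ n) v]
    rw [hWs n, hvm, hset]
    by_cases hmem : σ n ∈ S
    · rw [Finset.insert_eq_self.mpr hmem, if_pos hmem, ih]
      abel
    · rw [if_neg hmem, Finset.sum_insert hmem, ih]
      have hz : Matrix.vecMulVec (k (σ n)) (0 : Fin d → ℝ) = 0 := by
        ext a b; simp [Matrix.vecMulVec]
      rw [hz]
      abel

open Classical in
theorem stmt_14 (d m : ℕ) (k v : Fin m → Fin d → ℝ)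
    (hk : ∀ i j : Fin m, k i ⬝ᵥ k j = if i = j then (1 : ℝ) else 0)
    (N N' : ℕ) (σ σ' : ℕ → Fin m)
    (W W' : ℕ → Matrix (Fin d) (Fin d) ℝ)
    (hW0 : W 0 = 0) (hW'0 : W' 0 = 0)
    (hWs : ∀ t : ℕ, W (t + 1) =
      W t - Matrix.vecMulVec (k (σ t)) (Matrix.vecMul (k (σ t)) (W t))
          + Matrix.vecMulVec (k (σ t)) (v (σ t)))
    (hW's : ∀ t : ℕ, W' (t + 1) =
      W' t - Matrix.vecMulVec (k (σ' t)) (Matrix.vecMul (k (σ' t)) (W' t))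
           + Matrix.vecMulVec (k (σ' t)) (v (σ' t)))
    (hsupp : ∀ i : Fin m, (∃ t < N, σ t = i) ↔ (∃ t < N', σ' t = i)) :
    W N = (∑ i ∈ Finset.univ.filter (fun i : Fin m => ∃ t < N, σ t = i),
            Matrix.vecMulVec (k i) (v i)) ∧
    W N = W' N' := by
  have h1 := delta_general k v hk σ W hW0 hWs N
  have h2 := delta_general k v hk σ' W' hW'0 hW's N'
  refine ⟨h1, ?_⟩
  rw [h1, h2]
  congr 1
  ext i
  simp [hsupp i]
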